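/- Let C be a Grothendieck category with generator G that is κ(G)-presentable (κ(G) infinite regular), such that epimorphisms M ↠ M'' satisfy |C(G,M'')| ≤ |C(G,M)|. Let U : C → C be a colimit-preserving endofunctor. Then, setting λ^U := |C(G,UG)|^{κ(G)} × κ(G)^{κ(G)}, for every object M of C one has |C(G,UM)| ≤ λ^U × |C(G,M)|^{κ(G)}. -/

import Mathlib

open CategoryTheory CategoryTheory.Limits Opposite

universe w v u u₂ v₂

namespace Paper

variable {C : Type u} [Category.{v} C]

/-- A partially ordered set `J` is `κ`-directed if every subset of cardinality `< κ`
has an upper bound. -/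
def IsKappaDirected (κ : Cardinal.{v}) (J : Type v) [Preorder J] : Prop :=
  ∀ S : Set J, Cardinal.mk S < κ → ∃ j : J, ∀ s ∈ S, s ≤ j

/-- An object `M` is `κ`-presentable if `C(M,-)` preserves colimits of
`κ`-directed diagrams. -/
def IsPresentable (κ : Cardinal.{v}) (M : C) : Prop :=
  ∀ (J : Type v) [PartialOrder J], IsKappaDirected κ J →
    PreservesColimitsOfShape J (coyoneda.obj (op M))

/-- A category is locally `κ`-presentable if it is cocomplete and has a small
separating family of `κ`-presentable objects. -/
def IsLocallyKappaPresentable (κ : Cardinal.{v₂}) (A : Type u₂) [Category.{v₂} A] : Prop :=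
  ∃ (_ : HasColimits A) (S : Set A), Small.{v₂} S ∧ (∀ M ∈ S, IsPresentable κ M) ∧
    ObjectProperty.IsSeparating (fun X : A => X ∈ S)

/-- A category is locally presentable if it is locally `κ`-presentable for some
regular cardinal `κ`. -/
def IsLocallyPresentable (A : Type u₂) [Category.{v₂} A] : Prop :=
  ∃ κ : Cardinal.{v₂}, κ.IsRegular ∧ IsLocallyKappaPresentable κ A

/-- Filtered colimits exist when all colimits do. -/
def hasFilteredOfHasColimits {A : Type u₂} [Category.{v₂} A] (hc : HasColimits A) :
    HasFilteredColimits A :=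
  ⟨fun I _ _ => hc.has_colimits_of_shape I⟩

/-- A Grothendieck category: abelian, cocomplete, AB5, with a generator. -/
def IsGrothendieckCategory (A : Type u₂) [Category.{v₂} A] : Prop :=
  ∃ (_ : Abelian A) (hc : HasColimits A),
    @AB5 A _ (hasFilteredOfHasColimits hc) ∧ ∃ G : A, IsSeparator G

section MonadQuiver

variable {Q : Type v} [SmallCategory Q] (𝒰 : Q ⥤ Monad C)

/-- A module over a monad quiver `𝒰 : Q ⥤ Mnd(C)`: a family of Eilenberg-Moore
algebras `pt x ∈ EM_{𝒰 x}` together with compatible structure morphisms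
`pt x ⟶ (𝒰 φ)_* (pt y)` for each arrow `φ : x ⟶ y`. -/
structure UMod where
  pt : ∀ x : Q, (𝒰.obj x).Algebra
  tr : ∀ {x y : Q}, (x ⟶ y) → ((pt x).A ⟶ (pt y).A)
  compat : ∀ {x y : Q} (φ : x ⟶ y),
    (𝒰.obj x).toFunctor.map (tr φ) ≫ ((𝒰.map φ).app (pt y).A ≫ (pt y).a) =
      (pt x).a ≫ tr φ
  tr_id : ∀ x : Q, tr (𝟙 x) = 𝟙 (pt x).A
  tr_comp : ∀ {x y z : Q} (φ : x ⟶ y) (ψ : y ⟶ z), tr (φ ≫ ψ) = tr φ ≫ tr ψ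

variable {𝒰}

/-- Morphisms of modules over a monad quiver. -/
structure UModHom (M N : UMod 𝒰) where
  app : ∀ x : Q, (M.pt x).A ⟶ (N.pt x).A
  halg : ∀ x : Q,
    (𝒰.obj x).toFunctor.map (app x) ≫ (N.pt x).a = (M.pt x).a ≫ app x
  hcomm : ∀ {x y : Q} (φ : x ⟶ y), M.tr φ ≫ app y = app x ≫ N.tr φ

theorem UModHom.ext' {M N : UMod 𝒰} {f g : UModHom M N} (h : f.app = g.app) : f = g := by
  cases f; cases g; cases h; rfl

instance : Category (UMod 𝒰) where
  Hom := UModHom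
  id M :=
    { app := fun x => 𝟙 _
      halg := fun x => by simp
      hcomm := fun φ => by simp }
  comp {M N P} f g :=
    { app := fun x => f.app x ≫ g.app x
      halg := fun x => by
        rw [Functor.map_comp, Category.assoc, g.halg x, ← Category.assoc, f.halg x,
          Category.assoc]
      hcomm := fun φ => by
        rw [← Category.assoc, f.hcomm φ, Category.assoc, g.hcomm φ, ← Category.assoc] }
  id_comp f := UModHom.ext' (by funext x; exact Category.id_comp _)
  comp_id f := UModHom.ext' (by funext x; exact Category.comp_id _)
  assoc f g h := UModHom.ext' (by funext x; exact Category.assoc _ _ _)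

variable (𝒰)

/-- Evaluation of a `𝒰`-module at a vertex `x`. -/
def ev (x : Q) : UMod 𝒰 ⥤ (𝒰.obj x).Algebra where
  obj M := M.pt x
  map f := { f := f.app x, h := f.halg x }
  map_id _ := rfl
  map_comp _ _ := rfl

variable {𝒰}

/-- The structure morphism of a module, as a morphism `pt x ⟶ φ_* (pt y)` of
Eilenberg-Moore algebras. -/
def UMod.trHom (M : UMod 𝒰) {x y : Q} (φ : x ⟶ y) :
    M.pt x ⟶ (Monad.algebraFunctorOfMonadHom (𝒰.map φ)).obj (M.pt y) :=
  { f := M.tr φ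
    h := M.compat φ }

/-- `M` is cartesian at the edge `φ : x ⟶ y` if the structure morphism
`pt x ⟶ φ_* (pt y)` is a universal arrow; equivalently the adjoint transpose
`φ^* (pt x) ⟶ pt y` is an isomorphism. -/
def IsCartesianAt (M : UMod 𝒰) {x y : Q} (φ : x ⟶ y) : Prop :=
  ∀ (N : (𝒰.obj y).Algebra) (g : M.pt x ⟶ (Monad.algebraFunctorOfMonadHom (𝒰.map φ)).obj N),
    ∃! h : M.pt y ⟶ N,
      M.trHom φ ≫ (Monad.algebraFunctorOfMonadHom (𝒰.map φ)).map h = g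

end MonadQuiver

/-- `P` together with `η : M ⟶ φ_* P` is a reflection of `M` along restriction of
scalars, i.e. `η` exhibits `P` as `φ^* M`. -/
def IsExtension {T₁ T₂ : Monad C} (φ : T₁ ⟶ T₂) (M : T₁.Algebra) (P : T₂.Algebra)
    (η : M ⟶ (Monad.algebraFunctorOfMonadHom φ).obj P) : Prop :=
  ∀ (N : T₂.Algebra) (g : M ⟶ (Monad.algebraFunctorOfMonadHom φ).obj N),
    ∃! h : P ⟶ N, η ≫ (Monad.algebraFunctorOfMonadHom φ).map h = g

/-- A monad morphism `φ` is flat if the left adjoint `φ^*` of the restriction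
functor `φ_*` is exact. -/
def IsFlatMonadHom {T₁ T₂ : Monad C} (φ : T₁ ⟶ T₂) : Prop :=
  ∀ (L : T₁.Algebra ⥤ T₂.Algebra),
    Nonempty (L ⊣ Monad.algebraFunctorOfMonadHom φ) → PreservesFiniteLimits L

section Helpers
variable {D : Type u} [Category.{v} D] [HasColimits D]
variable {τ : Type v} (Y : D) (Ps : Set (Set τ))

@[simps, reducible]
noncomputable def subDiagram : {A : Set τ // A ∈ Ps} ⥤ D where
  obj A := ∐ (fun _ : A.1 => Y)
  map {A B} h := Sigma.desc (fun a => Sigma.ι (fun _ : B.1 => Y) ⟨a.1, leOfHom h a.2⟩)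
  map_id A := by apply Sigma.hom_ext; intro a; simp
  map_comp {A B D} f g := by apply Sigma.hom_ext; intro a; simp
@[simps, reducible]
noncomputable def subCocone : Cocone (subDiagram Y Ps) where
  pt := ∐ (fun _ : τ => Y)
  ι :=
    { app := fun A => Sigma.desc (fun a => Sigma.ι (fun _ : τ => Y) a.1)
      naturality := fun A B h => by
        apply Sigma.hom_ext; intro a; simp }

noncomputable def subCoconeIsColimit (hsing : ∀ t : τ, {t} ∈ Ps) :
    IsColimit (subCocone Y Ps) where
  desc c := Sigma.desc fun t =>
    Sigma.ι (fun _ : ({t} : Set τ) => Y) ⟨t, Set.mem_singleton t⟩ ≫ c.ι.app ⟨{t}, hsing t⟩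
  fac c A := by
    apply Sigma.hom_ext; intro a
    have h1 : (⟨{a.1}, hsing a.1⟩ : {A : Set τ // A ∈ Ps}) ⟶ A :=
      homOfLE (Set.singleton_subset_iff.mpr a.2)
    have hnat := c.w h1
    dsimp only
    rw [← Category.assoc]
    simp only [subCocone_ι_app, colimit.ι_desc, Cofan.mk_pt, Cofan.mk_ι_app]
    rw [← hnat, ← Category.assoc]
    congr 1
    simp [subDiagram]
  uniq c m hm := by
    apply Sigma.hom_ext; intro t
    have h2 : Sigma.ι (fun _ : τ => Y) t =
        Sigma.ι (fun _ : ({t} : Set τ) => Y) ⟨t, Set.mem_singleton t⟩ ≫ (subCocone Y Ps).ι.app ⟨{t}, hsing t⟩ := by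
      simp
    rw [h2, Category.assoc, hm]
    simp


end Helpers

section Helpers2
variable {D : Type u} [Category.{v} D]
@[simps]
def constCocone (P : Type v) [Preorder P] (Z : D) : Cocone ((Functor.const P).obj Z) where
  pt := Z
  ι := { app := fun _ => 𝟙 Z, naturality := fun _ _ _ => by simp }

noncomputable def constCoconeIsColimit (P : Type v) [Preorder P]
    [IsDirected P (· ≤ ·)] [Nonempty P] (Z : D) : IsColimit (constCocone P Z) where
  desc c := c.ι.app (Classical.arbitrary P)
  fac c p := by
    have key : ∀ {p q : P}, p ≤ q → c.ι.app p = c.ι.app q := by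
      intro p q h
      simpa using (c.w (homOfLE h)).symm
    obtain ⟨r, hr1, hr2⟩ := directed_of (· ≤ ·) p (Classical.arbitrary P)
    simp [key hr1, key hr2]; exact Category.id_comp _
  uniq c m hm := by simpa using (Category.id_comp m).symm.trans (hm (Classical.arbitrary P))

end Helpers2

section Mono
variable {D : Type u} [Category.{v} D] [Abelian D] [HasColimits D] [HasLimits D] [AB5 D]

open Classical in
/-- In an AB5 abelian category with all (co)limits, there is a monomorphism from a
copower into the corresponding power. -/
lemma exists_mono_coprod_to_prod (Y : D) (τ : Type v) :
    ∃ m : (∐ fun _ : τ => Y) ⟶ (∏ᶜ fun _ : τ => Y), Mono m := by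
  classical
  set P : Type v := {A : Set τ // A ∈ {B : Set τ | B.Finite}} with hP
  haveI : Nonempty P := ⟨⟨∅, Set.finite_empty⟩⟩
  haveI : IsDirected P (· ≤ ·) :=
    ⟨fun A B => ⟨⟨A.1 ∪ B.1, A.2.union B.2⟩, Set.subset_union_left, Set.subset_union_right⟩⟩
  haveI : PreservesFiniteLimits (colim (J := P) (C := D)) := inferInstance
  -- the natural transformation from the subcoproduct diagram to the constant product
  set t : subDiagram Y {B : Set τ | B.Finite} ⟶ (Functor.const P).obj (∏ᶜ fun _ : τ => Y) :=
    { app := fun B => Pi.lift fun s => Sigma.desc fun b => if (b : τ) = s then 𝟙 Y else 0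
      naturality := fun A B h => by
        apply Sigma.hom_ext; intro a
        apply Pi.hom_ext; intro s
        simp [subDiagram] } with ht
  haveI hmono : ∀ B : P, Mono (t.app B) := by
    intro B
    letI : Fintype B.1 := B.2.fintype
    have hretr : t.app B ≫ (∑ b : B.1, Pi.π (fun _ : τ => Y) (b : τ) ≫
        Sigma.ι (fun _ : B.1 => Y) b) = 𝟙 _ := by
      apply Sigma.hom_ext; intro c
      rw [← Category.assoc]
      rw [Preadditive.comp_sum]
      simp only [ht]
      simp only [← Category.assoc, colimit.ι_desc]
      simp [Subtype.coe_inj, ite_comp, Finset.sum_ite_eq]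
    exact ⟨fun {Z} g h H => by
      have h2 := H =≫ (∑ b : B.1, Pi.π (fun _ : τ => Y) (b : τ) ≫ Sigma.ι (fun _ : B.1 => Y) b)
      rw [Category.assoc, Category.assoc, hretr, Category.comp_id, Category.comp_id] at h2
      exact h2⟩
  haveI : Mono t := NatTrans.mono_of_mono_app t
  haveI : Mono (colim.map t) := colim.map_mono t
  have iso1 : (∐ fun _ : τ => Y) ≅ colimit (subDiagram Y {B : Set τ | B.Finite}) :=
    IsColimit.coconePointUniqueUpToIso
      (subCoconeIsColimit Y {B : Set τ | B.Finite} fun s => Set.finite_singleton s)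
      (colimit.isColimit _)
  have iso2 : colimit ((Functor.const P).obj (∏ᶜ fun _ : τ => Y)) ≅ (∏ᶜ fun _ : τ => Y) :=
    IsColimit.coconePointUniqueUpToIso (colimit.isColimit _)
      (constCoconeIsColimit P (∏ᶜ fun _ : τ => Y))
  exact ⟨iso1.hom ≫ colim.map t ≫ iso2.hom, inferInstance⟩
lemma mk_hom_coprod_le (G Y : D) (τ : Type v) :
    Cardinal.mk (G ⟶ ∐ fun _ : τ => Y) ≤ Cardinal.mk (G ⟶ Y) ^ Cardinal.mk τ := by
  obtain ⟨m, hm⟩ := exists_mono_coprod_to_prod Y τ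
  have h1 : Cardinal.mk (G ⟶ ∐ fun _ : τ => Y) ≤ Cardinal.mk (G ⟶ ∏ᶜ fun _ : τ => Y) :=
    Cardinal.mk_le_of_injective (f := fun g => g ≫ m) fun g1 g2 h => by
      simpa only [cancel_mono] using h
  have e : (G ⟶ ∏ᶜ fun _ : τ => Y) ≃ (τ → (G ⟶ Y)) :=
    { toFun := fun g s => g ≫ Pi.π _ s
      invFun := fun f => Pi.lift f
      left_inv := fun g => by apply Pi.hom_ext; intro s; simp
      right_inv := fun f => by funext s; simp }
  exact h1.trans_eq ((Cardinal.mk_congr e).trans (Cardinal.power_def _ _).symm)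
end Mono


/-- the modulus-like bound on a colimit-preserving endofunctor
(Theorem 2.2). -/
theorem norm_endofunctor_le {C : Type u} [Category.{v} C] [Abelian C] [HasColimits C] [AB5 C]
    (G : C) (hG : IsSeparator G) (κG : Cardinal.{v}) (hreg : κG.IsRegular)
    (hpres : IsPresentable κG G)
    (hepi : ∀ {X Y : C} (f : X ⟶ Y), Epi f → Cardinal.mk (G ⟶ Y) ≤ Cardinal.mk (G ⟶ X))
    (U : C ⥤ C) [PreservesColimits U] (M : C) :
    Cardinal.mk (G ⟶ U.obj M) ≤
      (Cardinal.mk (G ⟶ U.obj G) ^ κG * κG ^ κG) * Cardinal.mk (G ⟶ M) ^ κG := by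
  classical
  -- C has all limits
  haveI : WellPowered.{v} C := wellPowered_of_isSeparator G hG
  haveI : Small.{v} (↥({G} : Set C)) := small_subsingleton _
  haveI : HasLimits C := hasLimits_of_hasColimits_of_isSeparating hG
  haveI : Nonempty (G ⟶ U.obj G) := ⟨0⟩
  haveI : Nonempty (G ⟶ M) := ⟨0⟩
  have nu0 : Cardinal.mk (G ⟶ U.obj G) ≠ 0 := Cardinal.mk_ne_zero _
  have mu1 : (1 : Cardinal) ≤ Cardinal.mk (G ⟶ M) :=
    Cardinal.one_le_iff_ne_zero.mpr (Cardinal.mk_ne_zero _)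
  -- Step A : epi from the canonical copower
  haveI hepi1 : Epi (Sigma.desc fun f : G ⟶ M => f) := (isSeparator_iff_epi G).1 hG M
  have stepA : Cardinal.mk (G ⟶ U.obj M) ≤
      Cardinal.mk (G ⟶ U.obj (∐ fun _ : G ⟶ M => G)) :=
    hepi (U.map (Sigma.desc fun f : G ⟶ M => f)) (U.map_epi _)
  -- the poset of κ-small subsets
  set Ps : Set (Set (G ⟶ M)) := {A | Cardinal.mk A < κG} with hPs
  set J := {A : Set (G ⟶ M) // A ∈ Ps} with hJ
  have hdir : IsKappaDirected κG J := by
    intro T hT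
    refine ⟨⟨⋃ x : T, x.1.1, ?_⟩, ?_⟩
    · refine lt_of_le_of_lt Cardinal.mk_iUnion_le_sum_mk ?_
      exact Cardinal.sum_lt_of_isRegular hreg hT fun x => x.1.2
    · intro s hs
      exact Set.subset_iUnion (fun x : T => x.1.1) ⟨s, hs⟩
  have hsing : ∀ t : G ⟶ M, {t} ∈ Ps := by
    intro t
    show Cardinal.mk ↥({t} : Set (G ⟶ M)) < κG
    rw [Cardinal.mk_singleton]
    exact lt_of_lt_of_le Cardinal.one_lt_aleph0 hreg.aleph0_le
  haveI := hpres J hdir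
  have h1 := subCoconeIsColimit G Ps hsing
  have h2 := isColimitOfPreserves U h1
  have h3 := isColimitOfPreserves (coyoneda.obj (op G)) h2
  -- per-stage bound
  have stage : ∀ A : J, Cardinal.mk (G ⟶ U.obj (∐ fun _ : A.1 => G)) ≤
      Cardinal.mk (G ⟶ U.obj G) ^ κG := by
    intro A
    have iso : U.obj (∐ fun _ : A.1 => G) ≅ ∐ fun _ : A.1 => U.obj G :=
      preservesColimitIso U _ ≪≫ HasColimit.isoOfNatIso (Discrete.natIso fun i => Iso.refl _)
    calc Cardinal.mk (G ⟶ U.obj (∐ fun _ : A.1 => G))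
        = Cardinal.mk (G ⟶ ∐ fun _ : A.1 => U.obj G) :=
          Cardinal.mk_congr (Iso.homCongr (Iso.refl G) iso)
      _ ≤ Cardinal.mk (G ⟶ U.obj G) ^ Cardinal.mk A.1 := mk_hom_coprod_le G (U.obj G) A.1
      _ ≤ Cardinal.mk (G ⟶ U.obj G) ^ κG := Cardinal.power_le_power_left nu0 A.2.le
  -- Step B : the colimit bound
  have stepB : Cardinal.mk (G ⟶ U.obj (∐ fun _ : G ⟶ M => G)) ≤
      Cardinal.mk J * Cardinal.mk (G ⟶ U.obj G) ^ κG := by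
    have hsurj : Function.Surjective
        (fun p : Σ A : J, (G ⟶ U.obj (∐ fun _ : A.1 => G)) =>
          ((coyoneda.obj (op G)).mapCocone (U.mapCocone (subCocone G Ps))).ι.app p.1 p.2) := by
      intro x
      obtain ⟨j, y, hy⟩ := Types.jointly_surjective _ h3 x
      exact ⟨⟨j, y⟩, hy⟩
    calc Cardinal.mk (G ⟶ U.obj (∐ fun _ : G ⟶ M => G))
        ≤ Cardinal.mk (Σ A : J, (G ⟶ U.obj (∐ fun _ : A.1 => G))) :=
          Cardinal.mk_le_of_surjective hsurj
      _ = Cardinal.sum (fun A : J => Cardinal.mk (G ⟶ U.obj (∐ fun _ : A.1 => G))) :=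
          Cardinal.mk_sigma _
      _ ≤ Cardinal.sum (fun _ : J => Cardinal.mk (G ⟶ U.obj G) ^ κG) :=
          Cardinal.sum_le_sum _ _ stage
      _ = Cardinal.mk J * Cardinal.mk (G ⟶ U.obj G) ^ κG := Cardinal.sum_const' _ _
  -- Step D : bounding the number of κ-small subsets
  have hJbound : Cardinal.mk J ≤
      Cardinal.mk (G ⟶ M) ^ κG * κG ^ κG := by
    have hfun : ∀ A : J, ∃ g : κG.out → Option (G ⟶ M),
        A.1 = {s | some s ∈ Set.range g} := by
      intro A
      have hle : Cardinal.mk A.1 ≤ Cardinal.mk κG.out := by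
        rw [Cardinal.mk_out]; exact A.2.le
      obtain ⟨f⟩ := Cardinal.le_def _ _ |>.mp hle
      refine ⟨fun x => if h : ∃ a : A.1, f a = x then some h.choose.1 else none, ?_⟩
      ext s
      simp only [Set.mem_setOf_eq, Set.mem_range]
      constructor
      · intro hs
        refine ⟨f ⟨s, hs⟩, ?_⟩
        have hex : ∃ a : A.1, f a = f ⟨s, hs⟩ := ⟨⟨s, hs⟩, rfl⟩
        rw [dif_pos hex]
        have : hex.choose = ⟨s, hs⟩ := f.injective hex.choose_spec
        rw [this]
      · rintro ⟨x, hx⟩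
        by_cases h : ∃ a : A.1, f a = x
        · rw [dif_pos h] at hx
          have : h.choose.1 = s := Option.some.inj hx
          exact this ▸ h.choose.2
        · rw [dif_neg h] at hx
          exact absurd hx (by simp)
    choose g hg using hfun
    have hinj : Function.Injective g := fun A B h =>
      Subtype.ext (by rw [hg A, hg B, h])
    have htwo : (2 : Cardinal) ≤ κG := by
      refine le_trans ?_ hreg.aleph0_le
      exact_mod_cast (Cardinal.nat_lt_aleph0 2).le
    calc Cardinal.mk J ≤ Cardinal.mk (κG.out → Option (G ⟶ M)) :=
          Cardinal.mk_le_of_injective hinj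
      _ = (Cardinal.mk (G ⟶ M) + 1) ^ κG := by
          rw [← Cardinal.power_def, Cardinal.mk_option, Cardinal.mk_out]
      _ ≤ (Cardinal.mk (G ⟶ M) * 2) ^ κG := by
          refine Cardinal.power_le_power_right ?_
          rw [mul_two]
          exact add_le_add_right mu1 _
      _ = Cardinal.mk (G ⟶ M) ^ κG * 2 ^ κG := Cardinal.mul_power
      _ ≤ Cardinal.mk (G ⟶ M) ^ κG * κG ^ κG :=
          mul_le_mul_right (Cardinal.power_le_power_right htwo) _
  -- combine
  calc Cardinal.mk (G ⟶ U.obj M)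
      ≤ Cardinal.mk (G ⟶ U.obj (∐ fun _ : G ⟶ M => G)) := stepA
    _ ≤ Cardinal.mk J * Cardinal.mk (G ⟶ U.obj G) ^ κG := stepB
    _ ≤ (Cardinal.mk (G ⟶ M) ^ κG * κG ^ κG) * (Cardinal.mk (G ⟶ U.obj G) ^ κG) :=
        mul_le_mul_left hJbound _
    _ = (Cardinal.mk (G ⟶ U.obj G) ^ κG * κG ^ κG) * Cardinal.mk (G ⟶ M) ^ κG := by ring


end Paper
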